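/- arXiv:2204.06648 — 2 statements merged into one kernel-verified Lean document; each statement's English description precedes it below -/
import Mathlib

section
/- Let a, b, a', b' ∈ [0,1]. There exist distributions P and Q on (ZMod 2)^2 with d₂P = a, d₀P = b, d₂Q = a', d₀Q = b' and d₁P = d₁Q if and only if the four CHSH inequalities hold: 0 ≤ a + b + a' − b' ≤ 2, 0 ≤ a + b − a' + b' ≤ 2, 0 ≤ a − b + a' + b' ≤ 2, and 0 ≤ −a + b + a' + b' ≤ 2. (That is, a distribution on the boundary of the diamond scenario extends to the diamond precisely when the CHSH inequalities are satisfied.) -/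
open Finset

/-- A distribution on `(ZMod 2)²`: nonnegative with total mass 1. -/
def IsDist2 (p : ZMod 2 → ZMod 2 → ℝ) : Prop :=
  (∀ a b, 0 ≤ p a b) ∧ (∑ a : ZMod 2, ∑ b : ZMod 2, p a b = 1)

/-- The `d₀` edge marginal (at outcome `0`) of a distribution on a triangle. -/
def faceD0 (p : ZMod 2 → ZMod 2 → ℝ) : ℝ := p 0 0 + p 1 0

/-- The `d₁` edge marginal (at outcome `0`) of a distribution on a triangle. -/
def faceD1 (p : ZMod 2 → ZMod 2 → ℝ) : ℝ := p 0 0 + p 1 1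

/-- The `d₂` edge marginal (at outcome `0`) of a distribution on a triangle. -/
def faceD2 (p : ZMod 2 → ZMod 2 → ℝ) : ℝ := p 0 0 + p 0 1

lemma sum_zmod2 (f : ZMod 2 → ℝ) : ∑ x : ZMod 2, f x = f 0 + f 1 :=
  Fin.sum_univ_two f

/-- Build a triangle distribution with prescribed marginals `a = d₂`, `b = d₀`, `c = d₁`,
given the Fréchet-type compatibility inequalities. -/
lemma exists_dist (a b c : ℝ) (h1 : 1 - a - b ≤ c) (h2 : a + b - 1 ≤ c)
    (h3 : c ≤ 1 + b - a) (h4 : c ≤ 1 + a - b) :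
    ∃ P : ZMod 2 → ZMod 2 → ℝ, IsDist2 P ∧ faceD2 P = a ∧ faceD0 P = b ∧ faceD1 P = c := by
  refine ⟨fun x y => if x = 0 then (if y = 0 then (c + a + b - 1) / 2 else (c - a + b - 1) / -2)
      else (if y = 0 then (c + a - b - 1) / -2 else (c - a - b + 1) / 2), ⟨?_, ?_⟩, ?_, ?_, ?_⟩
  · intro x y
    by_cases hx : x = 0 <;> by_cases hy : y = 0 <;> simp [hx, hy] <;> linarith
  · rw [sum_zmod2, sum_zmod2, sum_zmod2]
    norm_num
    ring
  · simp only [faceD2]; norm_num; ring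
  · simp only [faceD0]; norm_num; ring
  · simp only [faceD1]; norm_num; ring

/-- **Extension to the diamond is characterized by the CHSH inequalities.**
For `a, b, a', b' ∈ [0,1]`: there exist distributions `P`, `Q` on `(ZMod 2)²` with
`d₂P = a`, `d₀P = b`, `d₂Q = a'`, `d₀Q = b'` and matching `d₁` marginals iff the four
CHSH inequalities hold. -/
theorem diamond_extension_iff_CHSH (a b a' b' : ℝ)
    (ha : a ∈ Set.Icc (0 : ℝ) 1) (hb : b ∈ Set.Icc (0 : ℝ) 1)
    (ha' : a' ∈ Set.Icc (0 : ℝ) 1) (hb' : b' ∈ Set.Icc (0 : ℝ) 1) :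
    (∃ P Q : ZMod 2 → ZMod 2 → ℝ, IsDist2 P ∧ IsDist2 Q ∧
      faceD2 P = a ∧ faceD0 P = b ∧ faceD2 Q = a' ∧ faceD0 Q = b' ∧
      faceD1 P = faceD1 Q) ↔
    ((0 ≤ a + b + a' - b' ∧ a + b + a' - b' ≤ 2) ∧
     (0 ≤ a + b - a' + b' ∧ a + b - a' + b' ≤ 2) ∧
     (0 ≤ a - b + a' + b' ∧ a - b + a' + b' ≤ 2) ∧
     (0 ≤ -a + b + a' + b' ∧ -a + b + a' + b' ≤ 2)) := by
  obtain ⟨ha0, ha1⟩ := ha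
  obtain ⟨hb0, hb1⟩ := hb
  obtain ⟨ha0', ha1'⟩ := ha'
  obtain ⟨hb0', hb1'⟩ := hb'
  constructor
  · rintro ⟨P, Q, ⟨hPn, hPs⟩, ⟨hQn, hQs⟩, hPa, hPb, hQa, hQb, hPQ⟩
    rw [sum_zmod2] at hPs hQs
    rw [sum_zmod2 (P 0), sum_zmod2 (P 1)] at hPs
    rw [sum_zmod2 (Q 0), sum_zmod2 (Q 1)] at hQs
    simp only [faceD0, faceD1, faceD2] at hPa hPb hQa hQb hPQ
    have p00 := hPn 0 0; have p01 := hPn 0 1; have p10 := hPn 1 0; have p11 := hPn 1 1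
    have q00 := hQn 0 0; have q01 := hQn 0 1; have q10 := hQn 1 0; have q11 := hQn 1 1
    refine ⟨⟨?_, ?_⟩, ⟨?_, ?_⟩, ⟨?_, ?_⟩, ⟨?_, ?_⟩⟩ <;> linarith
  · rintro ⟨⟨h1, h2⟩, ⟨h3, h4⟩, ⟨h5, h6⟩, ⟨h7, h8⟩⟩
    set c := max (max (a + b - 1) (1 - a - b)) (max (a' + b' - 1) (1 - a' - b')) with hc
    have c1 : a + b - 1 ≤ c := le_max_of_le_left (le_max_left _ _)
    have c2 : 1 - a - b ≤ c := le_max_of_le_left (le_max_right _ _)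
    have c3 : a' + b' - 1 ≤ c := le_max_of_le_right (le_max_left _ _)
    have c4 : 1 - a' - b' ≤ c := le_max_of_le_right (le_max_right _ _)
    have cub : ∀ u : ℝ, a + b - 1 ≤ u → 1 - a - b ≤ u → a' + b' - 1 ≤ u → 1 - a' - b' ≤ u →
        c ≤ u := fun u x1 x2 x3 x4 =>
      max_le (max_le x1 x2) (max_le x3 x4)
    have d1 : c ≤ 1 + b - a := cub _ (by linarith) (by linarith) (by linarith) (by linarith)
    have d2 : c ≤ 1 + a - b := cub _ (by linarith) (by linarith) (by linarith) (by linarith)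
    have d3 : c ≤ 1 + b' - a' := cub _ (by linarith) (by linarith) (by linarith) (by linarith)
    have d4 : c ≤ 1 + a' - b' := cub _ (by linarith) (by linarith) (by linarith) (by linarith)
    obtain ⟨P, hP, hPa, hPb, hPc⟩ := exists_dist a b c c2 c1 d1 d2
    obtain ⟨Q, hQ, hQa, hQb, hQc⟩ := exists_dist a' b' c c4 c3 d3 d4
    exact ⟨P, Q, hP, hQ, hPa, hPb, hQa, hQb, by rw [hPc, hQc]⟩
end

section
/- For a function q : (ZMod 2)^3 → ℝ define its four face marginals, each a function (ZMod 2)^2 → ℝ: (d₀q)(a₂,a₃) = ∑_a q(a,a₂,a₃), (d₁q)(b,a₃) = ∑_{a₁+a₂=b} q(a₁,a₂,a₃), (d₂q)(a₁,b) = ∑_{a₂+a₃=b} q(a₁,a₂,a₃), (d₃q)(a₁,a₂) = ∑_a q(a₁,a₂,a); likewise for p : (ZMod 2)^2 → ℝ define (d₀p)(a) = ∑_b p(b,a), (d₁p)(a) = ∑_{b+c=a} p(b,c), (d₂p)(a) = ∑_b p(a,b). Let p₀, p₁, p₂, p₃ be distributions on (ZMod 2)^2 satisfying the simplicial compatibility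 conditions d_i p_j = d_{j−1} p_i for all 0 ≤ i < j ≤ 3. Then there exists a distribution q on (ZMod 2)^3 (nonnegative with total sum 1) with d_i q = p_i for i = 0,1,2,3. Consequently, every simplicial probability distribution on the boundary of the 3-simplex with outcome space the nerve of Z₂ extends to the 3-simplex, and hence is noncontextual. -/
open Finset

/-- A distribution on `(ZMod 2)³`: nonnegative with total mass 1. -/
def IsDist3 (q : ZMod 2 → ZMod 2 → ZMod 2 → ℝ) : Prop :=
  (∀ a b c, 0 ≤ q a b c) ∧
  (∑ a : ZMod 2, ∑ b : ZMod 2, ∑ c : ZMod 2, q a b c = 1)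

/-- Face marginals of a distribution on `(ZMod 2)²` (faces of a triangle). -/
def face2 (i : Fin 3) (p : ZMod 2 → ZMod 2 → ℝ) : ZMod 2 → ℝ :=
  match i with
  | 0 => fun a => ∑ b : ZMod 2, p b a
  | 1 => fun a => ∑ x ∈ univ.filter (fun x : ZMod 2 × ZMod 2 => x.1 + x.2 = a), p x.1 x.2
  | 2 => fun a => ∑ b : ZMod 2, p a b

/-- Face marginals of a distribution on `(ZMod 2)³` (faces of a tetrahedron). -/
def face3 (i : Fin 4) (q : ZMod 2 → ZMod 2 → ZMod 2 → ℝ) : ZMod 2 → ZMod 2 → ℝ :=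
  match i with
  | 0 => fun a₂ a₃ => ∑ a : ZMod 2, q a a₂ a₃
  | 1 => fun b a₃ =>
      ∑ x ∈ univ.filter (fun x : ZMod 2 × ZMod 2 => x.1 + x.2 = b), q x.1 x.2 a₃
  | 2 => fun a₁ b =>
      ∑ x ∈ univ.filter (fun x : ZMod 2 × ZMod 2 => x.1 + x.2 = b), q a₁ x.1 x.2
  | 3 => fun a₁ a₂ => ∑ a : ZMod 2, q a₁ a₂ a

lemma sumZ (f : ZMod 2 → ℝ) : ∑ a : ZMod 2, f a = f 0 + f 1 := by
  have : (univ : Finset (ZMod 2)) = {0, 1} := by decide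
  rw [this]; simp

lemma sumF (p : ZMod 2 → ZMod 2 → ℝ) (a : ZMod 2) :
    ∑ x ∈ univ.filter (fun x : ZMod 2 × ZMod 2 => x.1 + x.2 = a), p x.1 x.2
      = p 0 a + p 1 (1 + a) := by
  have h : univ.filter (fun x : ZMod 2 × ZMod 2 => x.1 + x.2 = a)
      = {(0, a), (1, 1 + a)} := by
    fin_cases a <;> decide
  rw [h, Finset.sum_insert (by fin_cases a <;> decide), Finset.sum_singleton]

lemma face2_0 (p : ZMod 2 → ZMod 2 → ℝ) (a : ZMod 2) :
    face2 0 p a = p 0 a + p 1 a := by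
  show ∑ b : ZMod 2, p b a = _; rw [sumZ]

lemma face2_1 (p : ZMod 2 → ZMod 2 → ℝ) (a : ZMod 2) :
    face2 1 p a = p 0 a + p 1 (1 + a) := by
  show ∑ x ∈ univ.filter (fun x : ZMod 2 × ZMod 2 => x.1 + x.2 = a), p x.1 x.2 = _
  rw [sumF]

lemma face2_2 (p : ZMod 2 → ZMod 2 → ℝ) (a : ZMod 2) :
    face2 2 p a = p a 0 + p a 1 := by
  show ∑ b : ZMod 2, p a b = _; rw [sumZ]

lemma face3_0 (q : ZMod 2 → ZMod 2 → ZMod 2 → ℝ) (b c : ZMod 2) :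
    face3 0 q b c = q 0 b c + q 1 b c := by
  show ∑ a : ZMod 2, q a b c = _; rw [sumZ]

lemma face3_1 (q : ZMod 2 → ZMod 2 → ZMod 2 → ℝ) (b c : ZMod 2) :
    face3 1 q b c = q 0 b c + q 1 (1 + b) c := by
  show ∑ x ∈ univ.filter (fun x : ZMod 2 × ZMod 2 => x.1 + x.2 = b), q x.1 x.2 c = _
  rw [sumF (fun u v => q u v c)]

lemma face3_2 (q : ZMod 2 → ZMod 2 → ZMod 2 → ℝ) (a b : ZMod 2) :
    face3 2 q a b = q a 0 b + q a 1 (1 + b) := by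
  show ∑ x ∈ univ.filter (fun x : ZMod 2 × ZMod 2 => x.1 + x.2 = b), q a x.1 x.2 = _
  rw [sumF (fun u v => q a u v)]

lemma face3_3 (q : ZMod 2 → ZMod 2 → ZMod 2 → ℝ) (a b : ZMod 2) :
    face3 3 q a b = q a b 0 + q a b 1 := by
  show ∑ c : ZMod 2, q a b c = _; rw [sumZ]

lemma zmod2_cases : ∀ a : ZMod 2, a = 0 ∨ a = 1 := by decide

/-- **Every distribution on the boundary of the 3-simplex extends to the 3-simplex.**
Given four distributions `p₀, p₁, p₂, p₃` on `(ZMod 2)²` satisfying the simplicial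
compatibility conditions `dᵢ pⱼ = d_{j-1} pᵢ` for `i < j`, there is a distribution `q`
on `(ZMod 2)³` with `dᵢ q = pᵢ` for all `i`.  Hence every simplicial probability
distribution on `(∂Δ³, N ℤ₂)` is noncontextual. -/
theorem boundary_delta3_extends (p₀ p₁ p₂ p₃ : ZMod 2 → ZMod 2 → ℝ)
    (h₀ : IsDist2 p₀) (h₁ : IsDist2 p₁) (h₂ : IsDist2 p₂) (h₃ : IsDist2 p₃)
    (c01 : face2 0 p₁ = face2 0 p₀)
    (c02 : face2 0 p₂ = face2 1 p₀)
    (c03 : face2 0 p₃ = face2 2 p₀)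
    (c12 : face2 1 p₂ = face2 1 p₁)
    (c13 : face2 1 p₃ = face2 2 p₁)
    (c23 : face2 2 p₃ = face2 2 p₂) :
    ∃ q : ZMod 2 → ZMod 2 → ZMod 2 → ℝ, IsDist3 q ∧
      face3 0 q = p₀ ∧ face3 1 q = p₁ ∧ face3 2 q = p₂ ∧ face3 3 q = p₃ := by
  have h11 : (1 + 1 : ZMod 2) = 0 := by decide
  have h10 : (1 + 0 : ZMod 2) = 1 := by decide
  -- scalar compatibility equations
  have e01 : ∀ a, p₁ 0 a + p₁ 1 a = p₀ 0 a + p₀ 1 a := fun a => by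
    have := congrFun c01 a; rwa [face2_0, face2_0] at this
  have e02 : ∀ a, p₂ 0 a + p₂ 1 a = p₀ 0 a + p₀ 1 (1 + a) := fun a => by
    have := congrFun c02 a; rwa [face2_0, face2_1] at this
  have e03 : ∀ a, p₃ 0 a + p₃ 1 a = p₀ a 0 + p₀ a 1 := fun a => by
    have := congrFun c03 a; rwa [face2_0, face2_2] at this
  have e12 : ∀ a, p₂ 0 a + p₂ 1 (1 + a) = p₁ 0 a + p₁ 1 (1 + a) := fun a => by
    have := congrFun c12 a; rwa [face2_1, face2_1] at this
  have e13 : ∀ a, p₃ 0 a + p₃ 1 (1 + a) = p₁ a 0 + p₁ a 1 := fun a => by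
    have := congrFun c13 a; rwa [face2_1, face2_2] at this
  have e23 : ∀ a, p₃ a 0 + p₃ a 1 = p₂ a 0 + p₂ a 1 := fun a => by
    have := congrFun c23 a; rwa [face2_2, face2_2] at this
  have e01₀ := e01 0; have e01₁ := e01 1
  have e02₀ := e02 0; have e02₁ := e02 1
  have e03₀ := e03 0; have e03₁ := e03 1
  have e12₀ := e12 0; have e12₁ := e12 1
  have e13₀ := e13 0; have e13₁ := e13 1
  have e23₀ := e23 0; have e23₁ := e23 1
  rw [h10] at e02₀ e12₀ e13₀
  rw [h11] at e02₁ e12₁ e13₁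
  -- nonnegativity facts
  obtain ⟨n₀, s₀⟩ := h₀; obtain ⟨n₁, s₁⟩ := h₁
  obtain ⟨n₂, s₂⟩ := h₂; obtain ⟨n₃, s₃⟩ := h₃
  simp only [sumZ] at s₀ s₁ s₂ s₃
  have n₀00 := n₀ 0 0; have n₀01 := n₀ 0 1; have n₀10 := n₀ 1 0; have n₀11 := n₀ 1 1
  have n₁00 := n₁ 0 0; have n₁01 := n₁ 0 1; have n₁10 := n₁ 1 0; have n₁11 := n₁ 1 1
  have n₂00 := n₂ 0 0; have n₂01 := n₂ 0 1; have n₂10 := n₂ 1 0; have n₂11 := n₂ 1 1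
  have n₃00 := n₃ 0 0; have n₃01 := n₃ 0 1; have n₃10 := n₃ 1 0; have n₃11 := n₃ 1 1
  -- the free parameter
  set s : ℝ := p₃ 0 0 with hs
  set A : ℝ := p₁ 0 0 - p₀ 1 0 with hA
  set B : ℝ := p₁ 0 1 - p₀ 1 1 with hB
  set t : ℝ := max (max 0 A) (max (s - p₀ 0 1) (s - p₁ 0 1)) with ht
  have lt1 : (0:ℝ) ≤ t := le_trans (le_max_left 0 A) (le_max_left _ _)
  have lt2 : A ≤ t := le_trans (le_max_right 0 A) (le_max_left _ _)
  have lt3 : s - p₀ 0 1 ≤ t := le_trans (le_max_left _ _) (le_max_right _ _)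
  have lt4 : s - p₁ 0 1 ≤ t := le_trans (le_max_right _ _) (le_max_right _ _)
  have ut1 : t ≤ s := by
    rw [ht]; simp only [max_le_iff]
    refine ⟨⟨?_, ?_⟩, ?_, ?_⟩ <;> [skip; rw [hA]; rw [hs]; rw [hs]] <;> linarith
  have ut2 : t ≤ s - B := by
    rw [ht]; simp only [max_le_iff]
    refine ⟨⟨?_, ?_⟩, ?_, ?_⟩ <;> [rw [hB]; rw [hA, hB]; rw [hB]; rw [hB]] <;> linarith
  have ut3 : t ≤ p₀ 0 0 := by
    rw [ht]; simp only [max_le_iff]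
    refine ⟨⟨?_, ?_⟩, ?_, ?_⟩ <;> [skip; rw [hA]; rw [hs]; rw [hs]] <;> linarith
  have ut4 : t ≤ p₁ 0 0 := by
    rw [ht]; simp only [max_le_iff]
    refine ⟨⟨?_, ?_⟩, ?_, ?_⟩ <;> [skip; rw [hA]; rw [hs]; rw [hs]] <;> linarith
  clear ht
  -- the extension
  obtain ⟨q, v000, v001, v010, v011, v100, v101, v110, v111⟩ :
      ∃ q : ZMod 2 → ZMod 2 → ZMod 2 → ℝ,
        q 0 0 0 = t ∧ q 0 0 1 = s - t ∧ q 0 1 0 = t - A ∧ q 0 1 1 = s - t - B ∧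
        q 1 0 0 = p₀ 0 0 - t ∧ q 1 0 1 = p₀ 0 1 - (s - t) ∧
        q 1 1 0 = p₀ 1 0 - (t - A) ∧ q 1 1 1 = p₀ 1 1 - (s - t - B) := by
    refine ⟨fun a b c =>
      if a = 0 then
        (if b = 0 then (if c = 0 then t else s - t)
         else (if c = 0 then t - A else s - t - B))
      else
        (if b = 0 then (if c = 0 then p₀ 0 0 - t else p₀ 0 1 - (s - t))
         else (if c = 0 then p₀ 1 0 - (t - A) else p₀ 1 1 - (s - t - B))),
      ?_, ?_, ?_, ?_, ?_, ?_, ?_, ?_⟩ <;> norm_num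
  refine ⟨q, ⟨?_, ?_⟩, ?_, ?_, ?_, ?_⟩
  · intro a b c
    rcases zmod2_cases a with ha | ha <;> rcases zmod2_cases b with hb | hb <;>
      rcases zmod2_cases c with hc | hc <;> subst ha <;> subst hb <;> subst hc <;>
      [rw [v000]; rw [v001]; rw [v010]; rw [v011]; rw [v100]; rw [v101];
       rw [v110]; rw [v111]] <;> [skip; linarith; rw [hA]; rw [hB]; linarith;
       rw [hs]; rw [hA]; rw [hB, hs]] <;> linarith
  · simp only [sumZ, v000, v001, v010, v011, v100, v101, v110, v111]
    linarith
  · funext b c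
    rw [face3_0]
    rcases zmod2_cases b with hb | hb <;> rcases zmod2_cases c with hc | hc <;>
      subst hb <;> subst hc <;>
      simp only [v000, v001, v010, v011, v100, v101, v110, v111] <;> ring
  · funext b c
    rw [face3_1]
    rcases zmod2_cases b with hb | hb <;> rcases zmod2_cases c with hc | hc <;>
      subst hb <;> subst hc <;> first
        | rw [show (1:ZMod 2) + 0 = 1 from h10]
        | rw [show (1:ZMod 2) + 1 = 0 from h11]
    all_goals simp only [v000, v001, v010, v011, v100, v101, v110, v111, hA, hB, hs]
    all_goals linarith
  · funext a b
    rw [face3_2]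
    rcases zmod2_cases a with ha | ha <;> rcases zmod2_cases b with hb | hb <;>
      subst ha <;> subst hb <;> first
        | rw [show (1:ZMod 2) + 0 = 1 from h10]
        | rw [show (1:ZMod 2) + 1 = 0 from h11]
    all_goals simp only [v000, v001, v010, v011, v100, v101, v110, v111, hA, hB, hs]
    all_goals linarith
  · funext a b
    rw [face3_3]
    rcases zmod2_cases a with ha | ha <;> rcases zmod2_cases b with hb | hb <;>
      subst ha <;> subst hb <;>
      simp only [v000, v001, v010, v011, v100, v101, v110, v111, hA, hB, hs] <;>
      linarith
end
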